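/- arXiv:1708.08345 — 3 statements merged into one kernel-verified Lean document; each statement's English description precedes it below -/
import Mathlib

section
/- Let λ > 0, α > 0, t > 0 and n a positive natural number. Then the n-th derivative of the function t ↦ E_{α,1}(−λ t^α) satisfies d^n/dt^n E_{α,1}(−λ t^α) = −λ t^{α−n} E_{α,α−n+1}(−λ t^α). -/
open Real Filter Set
section AuxML
open Nat

lemma rpow_div_gamma_hasDerivAt (c : ℝ) {s : ℝ} (hs : 0 < s) :
    HasDerivAt (fun y : ℝ => y ^ c / Real.Gamma (c + 1)) (s ^ (c - 1) / Real.Gamma c) s := by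
  have h := (Real.hasDerivAt_rpow_const (x := s) (p := c) (Or.inl hs.ne')).div_const
    (Real.Gamma (c + 1))
  refine h.congr_deriv ?_
  symm
  rcases eq_or_ne c 0 with rfl | hc
  · simp [Real.Gamma_zero]
  · rw [Real.Gamma_add_one hc]
    rcases eq_or_ne (Real.Gamma c) 0 with h0 | h0
    · simp [h0]
    · field_simp

lemma exists_pow_le_factorial (x : ℝ) : ∃ C > 0, ∀ m : ℕ, x ^ m ≤ C * (m ! : ℝ) := by
  obtain ⟨C, hC⟩ := (Real.summable_pow_div_factorial x).tendsto_atTop_zero.bddAbove_range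
  refine ⟨max C 1, lt_max_of_lt_right one_pos, fun m => ?_⟩
  have h1 : x ^ m / (m ! : ℝ) ≤ C := hC ⟨m, rfl⟩
  have h2 : (0 : ℝ) < (m ! : ℝ) := by positivity
  calc x ^ m ≤ C * (m ! : ℝ) := by rwa [← div_le_iff₀ h2]
    _ ≤ max C 1 * (m ! : ℝ) := by gcongr; exact le_max_left _ _

-- Gamma lower bound for y ≥ 2
lemma gamma_ge {x : ℝ} (hx : 1 ≤ x) {C : ℝ} (hC : 0 < C)
    (hfac : ∀ m : ℕ, x ^ m ≤ C * (m ! : ℝ)) {y : ℝ} (hy : 2 ≤ y) :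
    x ^ (y - 2) / C ≤ Real.Gamma y := by
  set m := ⌊y⌋₊ with hm
  have hy0 : (0:ℝ) ≤ y := by linarith
  have hm2 : 2 ≤ m := Nat.le_floor (by exact_mod_cast hy)
  have hmy : (m : ℝ) ≤ y := Nat.floor_le hy0
  have h1 : Real.Gamma (m : ℝ) ≤ Real.Gamma y := by
    rcases eq_or_lt_of_le hmy with h | h
    · rw [h]
    · exact le_of_lt (Real.Gamma_strictMonoOn_Ici (show (m:ℝ) ∈ Ici 2 by simpa using (by exact_mod_cast hm2 : (2:ℝ) ≤ m)) (show y ∈ Ici 2 from hy) h)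
  have h2 : Real.Gamma (m : ℝ) = ((m - 1)! : ℝ) := by
    have : (m : ℝ) = ((m - 1 : ℕ) : ℝ) + 1 := by
      have : 1 ≤ m := le_trans one_le_two hm2
      push_cast [Nat.cast_sub this]
      ring
    rw [this, Real.Gamma_nat_eq_factorial]
  have h3 : x ^ (y - 2) ≤ x ^ ((m - 1 : ℕ) : ℝ) := by
    apply Real.rpow_le_rpow_of_exponent_le hx
    have := Nat.lt_floor_add_one y
    have h1m : 1 ≤ m := le_trans one_le_two hm2
    push_cast [Nat.cast_sub h1m]
    linarith
  have h4 : x ^ ((m - 1 : ℕ) : ℝ) ≤ C * (((m-1)! : ℕ) : ℝ) := by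
    rw [Real.rpow_natCast]; exact hfac _
  rw [div_le_iff₀ hC] at *
  calc x ^ (y-2) ≤ C * (((m-1)! : ℕ) : ℝ) := le_trans h3 h4
    _ = Real.Gamma (m:ℝ) * C := by rw [h2]; ring
    _ ≤ Real.Gamma y * C := by
        have := Real.Gamma_pos_of_pos (show (0:ℝ) < y by linarith)
        nlinarith

lemma summable_aux {α : ℝ} (hα : 0 < α) (β : ℝ) {r : ℝ} (hr : 0 ≤ r) :
    Summable (fun k : ℕ => r ^ k / |Real.Gamma (k * α + β)|) := by
  set q : ℝ := 2 * r + 2 with hq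
  have hq2 : (2:ℝ) ≤ q := by linarith
  have hq0 : (0:ℝ) < q := by linarith
  set x : ℝ := q ^ (α⁻¹) with hxdef
  have hx1 : 1 ≤ x := Real.one_le_rpow (by linarith) (by positivity)
  have hx0 : (0:ℝ) < x := lt_of_lt_of_le one_pos hx1
  have hxa : x ^ α = q := by
    rw [hxdef, ← Real.rpow_mul hq0.le, inv_mul_cancel₀ hα.ne', Real.rpow_one]
  obtain ⟨C, hC0, hC⟩ := exists_pow_le_factorial x
  obtain ⟨N, hN⟩ := exists_nat_ge ((2 - β) / α)
  rw [← summable_nat_add_iff N]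
  have key : ∀ k : ℕ, r ^ (k + N) / |Real.Gamma ((k + N : ℕ) * α + β)|
      ≤ (C * x ^ (2 - β) * (r / q) ^ N) * (r / q) ^ k := by
    intro k
    set y : ℝ := (k + N : ℕ) * α + β with hy
    have hy2 : 2 ≤ y := by
      have : ((2 - β) / α) * α ≤ ((k + N : ℕ) : ℝ) * α := by
        apply mul_le_mul_of_nonneg_right _ hα.le
        calc ((2 - β) / α) ≤ (N:ℝ) := hN
          _ ≤ ((k + N : ℕ) : ℝ) := by push_cast; linarith
      rw [div_mul_cancel₀ _ hα.ne'] at this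
      simp only [hy]; linarith
    have hG : x ^ (y - 2) / C ≤ Real.Gamma y := gamma_ge hx1 hC0 hC hy2
    have hGpos : 0 < Real.Gamma y := Real.Gamma_pos_of_pos (by linarith)
    rw [abs_of_pos hGpos]
    have hxy : x ^ (y - 2) = q ^ (k + N) * x ^ (β - 2) := by
      rw [hy, show ((k+N:ℕ):ℝ) * α + β - 2 = α * ((k+N:ℕ):ℝ) + (β-2) by ring,
        Real.rpow_add hx0, Real.rpow_mul hx0.le, hxa, Real.rpow_natCast]
    have hG2 : q ^ (k+N) * x ^ (β-2) / C ≤ Real.Gamma y := hxy ▸ hG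
    rw [div_le_iff₀ hGpos, mul_comm (C * x ^ (2 - β) * (r / q) ^ N) ((r/q)^k),
      ← mul_assoc, ← mul_assoc, mul_assoc ((r/q)^k * C) (x ^ (2-β)) ((r/q)^N)]
    have hxx : x ^ (2-β) * x ^ (β-2) = 1 := by
      rw [← Real.rpow_add hx0]; norm_num
    have h5 : (r/q)^(k+N) * q^(k+N) = r^(k+N) := by
      rw [div_pow, div_mul_cancel₀]
      positivity
    calc r ^ (k+N)
        = (C * x^(2-β) * (r/q)^(k+N)) * (q^(k+N) * x^(β-2)/C) := by
          rw [show (C * x^(2-β) * (r/q)^(k+N)) * (q^(k+N) * x^(β-2)/C)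
              = (x^(2-β) * x^(β-2)) * ((r/q)^(k+N) * q^(k+N)) * (C / C) by ring,
            hxx, h5, div_self hC0.ne', one_mul, mul_one]
      _ ≤ (C * x^(2-β) * (r/q)^(k+N)) * Real.Gamma y := by
          apply mul_le_mul_of_nonneg_left hG2 (by positivity)
      _ = (r/q)^k * C * (x ^ (2-β) * (r/q)^N) * Real.Gamma y := by
          rw [pow_add]; ring
  apply Summable.of_nonneg_of_le (fun k => by positivity) key
  apply Summable.mul_left
  apply summable_geometric_of_lt_one (by positivity)
  rw [div_lt_one hq0]
  linarith

lemma split_pow {a : ℝ} (ha : 0 < a) (lam c α : ℝ) (k : ℕ) :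
    lam ^ k * a ^ ((k : ℝ) * α + c) = a ^ c * (lam * a ^ α) ^ k := by
  rw [Real.rpow_add ha, mul_comm ((k : ℕ) : ℝ) α, Real.rpow_mul ha.le,
    Real.rpow_natCast, mul_pow]
  ring

lemma abs_term_eq {lam α : ℝ} (hlam : 0 ≤ lam) {s : ℝ} (hs : 0 < s) (β : ℝ) (k : ℕ) :
    |(-lam) ^ k * s ^ ((k : ℝ) * α + β) / Real.Gamma ((k : ℝ) * α + β + 1)|
      = s ^ β * ((lam * s ^ α) ^ k / |Real.Gamma ((k : ℝ) * α + (β + 1))|) := by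
  rw [abs_div, abs_mul, abs_pow, abs_neg, abs_of_nonneg hlam,
    abs_of_nonneg (Real.rpow_nonneg hs.le _), mul_div_assoc, ← mul_div_assoc,
    split_pow hs lam β α k, mul_div_assoc]
  norm_num [add_assoc]

lemma summable_term {lam α : ℝ} (hlam : 0 ≤ lam) (hα : 0 < α) (β : ℝ) {s : ℝ} (hs : 0 < s) :
    Summable (fun k : ℕ => (-lam) ^ k * s ^ ((k : ℝ) * α + β) / Real.Gamma ((k : ℝ) * α + β + 1)) := by
  apply Summable.of_abs
  apply Summable.congr (((summable_aux hα (β + 1) (by positivity : (0:ℝ) ≤ lam * s ^ α)).mul_left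
    (s ^ β))) (fun k => (abs_term_eq hlam hs β k).symm)

lemma hasDerivAt_ML {lam α : ℝ} (hlam : 0 < lam) (hα : 0 < α) (β : ℝ) {s : ℝ} (hs : 0 < s) :
    HasDerivAt (fun y : ℝ => ∑' k : ℕ, (-lam) ^ k * y ^ ((k : ℝ) * α + β) / Real.Gamma ((k : ℝ) * α + β + 1))
      (∑' k : ℕ, (-lam) ^ k * s ^ ((k : ℝ) * α + (β - 1)) / Real.Gamma ((k : ℝ) * α + (β - 1) + 1)) s := by
  have h2s : s / 2 < 2 * s := by linarith
  have hs2 : 0 < s / 2 := by linarith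
  have h2s0 : 0 < 2 * s := by linarith
  set u : ℕ → ℝ := fun k =>
    lam ^ k * ((s / 2) ^ ((k : ℝ) * α + (β - 1)) + (2 * s) ^ ((k : ℝ) * α + (β - 1)))
      / |Real.Gamma ((k : ℝ) * α + β)| with hu
  have hu_sum : Summable u := by
    apply Summable.congr
      (((summable_aux hα β (by positivity : (0:ℝ) ≤ lam * (s/2) ^ α)).mul_left ((s/2) ^ (β-1))).add
       ((summable_aux hα β (by positivity : (0:ℝ) ≤ lam * (2*s) ^ α)).mul_left ((2*s) ^ (β-1))))
    intro k
    rw [hu]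
    simp only []
    rw [mul_add, _root_.add_div, ← mul_div_assoc, ← mul_div_assoc, split_pow hs2 lam (β-1) α k,
      split_pow h2s0 lam (β-1) α k, mul_div_assoc, mul_div_assoc]
  have hbnd : ∀ (k : ℕ), ∀ y ∈ Set.Ioo (s/2) (2*s),
      ‖(-lam) ^ k * (y ^ ((k : ℝ) * α + β - 1) / Real.Gamma ((k : ℝ) * α + β))‖ ≤ u k := by
    intro k y hy
    have hy0 : 0 < y := lt_trans hs2 hy.1
    have hbound : y ^ ((k : ℝ) * α + β - 1)
        ≤ (s / 2) ^ ((k : ℝ) * α + (β - 1)) + (2 * s) ^ ((k : ℝ) * α + (β - 1)) := by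
      rw [show (k : ℝ) * α + (β - 1) = (k : ℝ) * α + β - 1 by ring]
      rcases le_or_gt 0 ((k : ℝ) * α + β - 1) with hc | hc
      · calc y ^ ((k : ℝ) * α + β - 1) ≤ (2*s) ^ ((k : ℝ) * α + β - 1) :=
              Real.rpow_le_rpow hy0.le hy.2.le hc
          _ ≤ _ := le_add_of_nonneg_left (by positivity)
      · calc y ^ ((k : ℝ) * α + β - 1) ≤ (s/2) ^ ((k : ℝ) * α + β - 1) :=
              Real.rpow_le_rpow_of_nonpos hs2 hy.1.le hc.le
          _ ≤ _ := le_add_of_nonneg_right (by positivity)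
    rw [Real.norm_eq_abs, abs_mul, abs_pow, abs_neg, abs_of_nonneg hlam.le, abs_div,
      abs_of_nonneg (Real.rpow_nonneg hy0.le _), hu]
    simp only []
    rw [mul_div_assoc, ← mul_div_assoc, ← mul_div_assoc]
    rcases eq_or_lt_of_le (abs_nonneg (Real.Gamma ((k : ℝ) * α + β))) with h0 | h0
    · rw [← h0, div_zero, div_zero]
    · rw [div_le_div_iff_of_pos_right h0]
      exact mul_le_mul_of_nonneg_left hbound (by positivity)
  have hbase : Summable (fun k : ℕ =>
      (-lam) ^ k * (s ^ ((k : ℝ) * α + β) / Real.Gamma ((k : ℝ) * α + β + 1))) :=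
    Summable.congr (summable_term hlam.le hα β hs) fun k => by rw [mul_div_assoc]
  have key := hasDerivAt_tsum_of_isPreconnected (u := u) (t := Set.Ioo (s/2) (2*s))
    (y₀ := s) (y := s)
    (g := fun k y => (-lam) ^ k * (y ^ ((k : ℝ) * α + β) / Real.Gamma ((k : ℝ) * α + β + 1)))
    (g' := fun k y => (-lam) ^ k * (y ^ ((k : ℝ) * α + β - 1) / Real.Gamma ((k : ℝ) * α + β)))
    hu_sum isOpen_Ioo isPreconnected_Ioo
    (fun k y hy => ((rpow_div_gamma_hasDerivAt ((k : ℝ) * α + β) (lt_trans hs2 hy.1)).const_mul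
      ((-lam) ^ k)))
    hbnd (mem_Ioo.mpr ⟨by linarith, by linarith⟩)
    hbase (mem_Ioo.mpr ⟨by linarith, by linarith⟩)
  have e1 : (fun y : ℝ => ∑' k : ℕ, (-lam) ^ k * y ^ ((k : ℝ) * α + β) / Real.Gamma ((k : ℝ) * α + β + 1))
      = (fun y : ℝ => ∑' k : ℕ, (-lam) ^ k * (y ^ ((k : ℝ) * α + β) / Real.Gamma ((k : ℝ) * α + β + 1))) :=
    funext fun y => tsum_congr fun k => mul_div_assoc _ _ _
  have e2 : (∑' k : ℕ, (-lam) ^ k * (s ^ ((k : ℝ) * α + β - 1) / Real.Gamma ((k : ℝ) * α + β)))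
      = ∑' k : ℕ, (-lam) ^ k * s ^ ((k : ℝ) * α + (β - 1)) / Real.Gamma ((k : ℝ) * α + (β - 1) + 1) := by
    refine tsum_congr fun k => ?_
    rw [← mul_div_assoc]
    ring_nf
  rw [e1, ← e2]
  exact key

end AuxML

/-- The Mittag-Leffler function `E_{α,β}(z) = ∑ₖ zᵏ / Γ(kα+β)` (real arguments);
terms where `Γ` has a pole contribute `0`, following Mathlib's convention `x/0 = 0`. -/
noncomputable def mittagLeffler (α β z : ℝ) : ℝ :=
  ∑' k : ℕ, z ^ k / Real.Gamma (k * α + β)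

/-- Lemma 2.1: the n-th derivative of $t ↦ E_{α,1}(-λ t^α)$ equals
$-λ t^{α-n} E_{α,α-n+1}(-λ t^α)$ for $λ>0$, $α>0$, $t>0$, $n ∈ ℕ^+$. -/
theorem iteratedDeriv_mittagLeffler (lam α t : ℝ) (hlam : 0 < lam) (hα : 0 < α)
    (ht : 0 < t) (n : ℕ) (hn : 1 ≤ n) :
    iteratedDeriv n (fun s : ℝ => mittagLeffler α 1 (-lam * s ^ α)) t
      = -lam * t ^ (α - (n : ℝ)) * mittagLeffler α (α - (n : ℝ) + 1) (-lam * t ^ α) := by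
  set f : ℝ → ℝ := fun s : ℝ => mittagLeffler α 1 (-lam * s ^ α) with hf
  have H : ∀ m : ℕ, ∀ s : ℝ, 0 < s → iteratedDeriv m f s
      = ∑' k : ℕ, (-lam) ^ k * s ^ ((k : ℝ) * α + (-(m : ℝ))) /
          Real.Gamma ((k : ℝ) * α + (-(m : ℝ)) + 1) := by
    intro m
    induction m with
    | zero =>
      intro s hs
      rw [iteratedDeriv_zero, hf]
      refine tsum_congr fun k => ?_
      rw [mul_pow, ← Real.rpow_natCast (s ^ α) k, ← Real.rpow_mul hs.le]
      push_cast
      ring_nf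
    | succ m ih =>
      intro s hs
      have hEq : iteratedDeriv m f =ᶠ[nhds s] fun y =>
          ∑' k : ℕ, (-lam) ^ k * y ^ ((k : ℝ) * α + (-(m : ℝ))) /
            Real.Gamma ((k : ℝ) * α + (-(m : ℝ)) + 1) :=
        Filter.eventuallyEq_of_mem (Ioi_mem_nhds hs) fun y hy => ih y hy
      rw [iteratedDeriv_succ, hEq.deriv_eq, (hasDerivAt_ML hlam hα (-(m : ℝ)) hs).deriv]
      refine tsum_congr fun k => ?_
      push_cast
      ring_nf
  rw [H n t ht]
  rw [show -lam * t ^ (α - (n : ℝ)) * mittagLeffler α (α - (n : ℝ) + 1) (-lam * t ^ α)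
      = (-lam * t ^ (α - (n : ℝ))) * ∑' k : ℕ, (-lam * t ^ α) ^ k /
          Real.Gamma ((k : ℝ) * α + (α - (n : ℝ) + 1)) from by rw [mittagLeffler],
    ← tsum_mul_left]
  rw [Summable.tsum_eq_zero_add (summable_term hlam.le hα (-(n : ℝ)) ht)]
  have h0 : (-lam) ^ (0:ℕ) * t ^ (((0:ℕ) : ℝ) * α + (-(n : ℝ))) /
      Real.Gamma (((0:ℕ) : ℝ) * α + (-(n : ℝ)) + 1) = 0 := by
    have : ((0:ℕ) : ℝ) * α + (-(n : ℝ)) + 1 = -(((n - 1 : ℕ)) : ℝ) := by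
      push_cast [Nat.cast_sub hn]
      ring
    rw [this, Real.Gamma_neg_nat_eq_zero, div_zero]
  rw [h0, zero_add]
  refine tsum_congr fun k => ?_
  have hk : ((k + 1 : ℕ) : ℝ) * α + (-(n : ℝ)) = (α - (n : ℝ)) + α * (k : ℝ) := by
    push_cast; ring
  have hk2 : (k : ℝ) * α + (α - (n : ℝ) + 1) = ((k + 1 : ℕ) : ℝ) * α + (-(n : ℝ)) + 1 := by
    push_cast; ring
  rw [mul_pow, ← Real.rpow_natCast (t ^ α) k, ← Real.rpow_mul ht.le, hk, hk2,
    Real.rpow_add ht, pow_succ]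
  push_cast
  ring_nf
end

section
/- Let 0 < α < 1 and λ > 0. Then for every t > 0, (1/Γ(1−α)) ∫_0^t (t−s)^{−α} (d/ds E_{α,1}(−λ s^α)) ds = −λ E_{α,1}(−λ t^α); that is, y(t) = E_{α,1}(−λ t^α) solves the fractional ordinary differential equation ∂_t^α y = −λ y with y(0) = 1, where ∂_t^α denotes the Djrbashian–Caputo fractional derivative of order α. -/
open Real Filter Set MeasureTheory

lemma gamma_lower {a b x : ℝ} (ha : 0 < a) (hx : 0 ≤ x) :
    ∃ c₀ > (0:ℝ), ∃ K : ℕ, ∀ k ≥ K, c₀ * (2*x+2) ^ k ≤ Real.Gamma (k * a + b) := by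
  set M : ℝ := (2*x+2) ^ (a⁻¹) with hMdef
  have hbase : (1:ℝ) ≤ 2*x+2 := by linarith
  have hbase0 : (0:ℝ) < 2*x+2 := by linarith
  have hM1 : 1 ≤ M := Real.one_le_rpow hbase (by positivity)
  have hM0 : 0 < M := lt_of_lt_of_le one_pos hM1
  have hMa : M ^ a = 2*x+2 := by
    rw [hMdef, ← Real.rpow_mul hbase0.le, inv_mul_cancel₀ ha.ne', Real.rpow_one]
  -- factorial lower bound: M^n ≤ C * n!
  have hsum := Real.summable_pow_div_factorial M
  set C : ℝ := ∑' n : ℕ, M ^ n / n.factorial with hCdef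
  have hC1 : (1:ℝ) ≤ C := by
    have := Summable.le_tsum hsum 0 (fun j _ => by positivity)
    simpa using this
  have hC0 : 0 < C := lt_of_lt_of_le one_pos hC1
  have hfac : ∀ n : ℕ, M ^ n ≤ C * n.factorial := by
    intro n
    have h1 : M ^ n / n.factorial ≤ C := Summable.le_tsum hsum n (fun j _ => by positivity)
    have h2 : (0:ℝ) < n.factorial := by positivity
    rw [div_le_iff₀ h2] at h1
    linarith
  refine ⟨M ^ (b - 2) / C, by positivity, ⌈(3 - b) / a⌉₊, fun k hk => ?_⟩
  have hk3 : 3 ≤ k * a + b := by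
    have h1 : (3 - b) / a ≤ (⌈(3 - b) / a⌉₊ : ℝ) := Nat.le_ceil _
    have h2 : ((⌈(3 - b) / a⌉₊ : ℕ) : ℝ) ≤ (k : ℝ) := Nat.cast_le.2 hk
    have := (div_le_iff₀ ha).mp (h1.trans h2)
    linarith
  set n : ℕ := ⌊k * a + b⌋₊ with hndef
  have hkab0 : (0:ℝ) ≤ k * a + b := by linarith
  have hn3 : 3 ≤ n := Nat.le_floor (by exact_mod_cast hk3)
  have hnle : (n : ℝ) ≤ k * a + b := Nat.floor_le hkab0
  have hnlt : k * a + b < n + 1 := Nat.lt_floor_add_one _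
  -- Γ(k a + b) ≥ Γ(n) = (n-1)!
  have hmono : Real.Gamma n ≤ Real.Gamma (k * a + b) := by
    rcases eq_or_lt_of_le hnle with h | h
    · rw [h]
    · exact le_of_lt (Real.Gamma_strictMonoOn_Ici
        (by simp; exact_mod_cast le_trans (by norm_num) hn3)
        (mem_Ici.2 (by exact_mod_cast le_trans (by norm_num : (2:ℝ) ≤ 3) hk3)) h)
  have hGn : Real.Gamma n = (n - 1).factorial := by
    have : n = (n - 1) + 1 := (Nat.succ_pred_eq_of_pos (by omega)).symm
    rw [this]
    exact_mod_cast Real.Gamma_nat_eq_factorial (n - 1)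
  -- (n-1)! ≥ M^(n-1)/C ≥ M^(ka+b-2)/C
  have h1 : M ^ ((n:ℝ) - 1) ≤ C * (n-1).factorial := by
    have := hfac (n - 1)
    calc M ^ ((n:ℝ) - 1) = M ^ (((n - 1 : ℕ)):ℝ) := by
            congr 1; have : 1 ≤ n := by omega
            push_cast [this]; ring
      _ = M ^ (n - 1 : ℕ) := by rw [Real.rpow_natCast]
      _ ≤ C * (n-1).factorial := this
  have h2 : M ^ (k * a + b - 2) ≤ M ^ ((n:ℝ) - 1) :=
    Real.rpow_le_rpow_of_exponent_le hM1 (by linarith)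
  have h3 : M ^ (k * a + b - 2) = (2*x+2) ^ k * M ^ (b - 2) := by
    have : k * a + b - 2 = a * (k:ℝ) + (b - 2) := by ring
    rw [this, Real.rpow_add hM0, Real.rpow_mul hM0.le, hMa, Real.rpow_natCast]
  calc M ^ (b-2) / C * (2*x+2) ^ k = M ^ (k * a + b - 2) / C := by rw [h3]; ring
    _ ≤ (n-1).factorial := by rw [div_le_iff₀ hC0]; nlinarith [h2.trans h1]
    _ = Real.Gamma n := hGn.symm
    _ ≤ _ := hmono

lemma summable_ml {a b x : ℝ} (ha : 0 < a) (hx : 0 ≤ x) :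
    Summable (fun k : ℕ => x ^ k / Real.Gamma (k * a + b)) := by
  obtain ⟨c₀, hc₀, K, hK⟩ := gamma_lower (b := b) ha hx
  have hbase0 : (0:ℝ) < 2*x+2 := by linarith
  rw [← summable_nat_add_iff K]
  have hGpos : ∀ k : ℕ, 0 < Real.Gamma ((k + K : ℕ) * a + b) := fun k =>
    lt_of_lt_of_le (by positivity) (hK (k+K) (Nat.le_add_left _ _))
  apply Summable.of_nonneg_of_le
    (f := fun k : ℕ => (1/c₀) * (1/2 : ℝ) ^ k)
    (fun k => div_nonneg (pow_nonneg hx _) (hGpos k).le)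
  · intro k
    have h1 : x ^ (k+K) / Real.Gamma ((k + K : ℕ) * a + b)
        ≤ x ^ (k+K) / (c₀ * (2*x+2) ^ (k+K)) :=
      div_le_div_of_nonneg_left (pow_nonneg hx _) (by positivity)
        (hK (k+K) (Nat.le_add_left _ _))
    have h2 : x ^ (k+K) / (c₀ * (2*x+2) ^ (k+K)) = (1/c₀) * (x/(2*x+2)) ^ (k+K) := by
      rw [div_pow]; ring
    have h3 : (x/(2*x+2)) ^ (k+K) ≤ (1/2 : ℝ) ^ (k+K) := by
      apply pow_le_pow_left₀ (by positivity)
      rw [div_le_div_iff₀ hbase0 (by norm_num)]; linarith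
    have h4 : (1/2 : ℝ) ^ (k+K) ≤ (1/2 : ℝ) ^ k :=
      pow_le_pow_of_le_one (by norm_num) (by norm_num) (Nat.le_add_right _ _)
    calc x ^ (k+K) / Real.Gamma ((k + K : ℕ) * a + b)
        ≤ (1/c₀) * (x/(2*x+2)) ^ (k+K) := by rw [← h2]; exact h1
      _ ≤ (1/c₀) * (1/2:ℝ) ^ k := by
          apply mul_le_mul_of_nonneg_left (h3.trans h4) (by positivity)
  · exact (summable_geometric_of_lt_one (by norm_num) (by norm_num)).mul_left _

lemma beta_ptwise {u v : ℝ} {x : ℝ} (hx : x ∈ Icc (0:ℝ) 1) :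
    ((x ^ (u-1) * (1-x) ^ (v-1) : ℝ) : ℂ)
      = (x : ℂ) ^ ((u:ℂ) - 1) * (1 - (x:ℂ)) ^ ((v:ℂ) - 1) := by
  obtain ⟨h0, h1⟩ := hx
  rw [Complex.ofReal_mul, Complex.ofReal_cpow h0, Complex.ofReal_cpow (by linarith)]
  push_cast
  ring_nf

lemma beta_intble {u v : ℝ} (hu : 0 < u) (hv : 0 < v) :
    IntervalIntegrable (fun x : ℝ => x ^ (u-1) * (1-x) ^ (v-1)) volume 0 1 := by
  have hC := Complex.betaIntegral_convergent (u := (u:ℂ)) (v := (v:ℂ))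
    (by simpa using hu) (by simpa using hv)
  rw [intervalIntegrable_iff_integrableOn_Ioc_of_le zero_le_one] at hC ⊢
  have := hC.re
  apply this.congr
  rw [Filter.EventuallyEq, ae_restrict_iff' measurableSet_Ioc]
  filter_upwards with x hx
  rw [← beta_ptwise (Ioc_subset_Icc_self hx)]
  simp

lemma beta_val {u v : ℝ} (hu : 0 < u) (hv : 0 < v) :
    ∫ x in (0:ℝ)..1, x ^ (u-1) * (1-x) ^ (v-1)
      = Real.Gamma u * Real.Gamma v / Real.Gamma (u+v) := by
  have huv : Real.Gamma (u+v) ≠ 0 := (Real.Gamma_pos_of_pos (by linarith)).ne'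
  rw [← Complex.ofReal_inj]
  have h1 : ((∫ x in (0:ℝ)..1, x ^ (u-1) * (1-x) ^ (v-1) : ℝ) : ℂ)
      = Complex.betaIntegral u v := by
    rw [← intervalIntegral.integral_ofReal]
    apply intervalIntegral.integral_congr
    intro x hx
    rw [Set.uIcc_of_le zero_le_one] at hx
    exact beta_ptwise hx
  have h2 := Complex.Gamma_mul_Gamma_eq_betaIntegral
    (s := (u:ℂ)) (t := (v:ℂ)) (by simpa using hu) (by simpa using hv)
  rw [h1]
  have h3 : Complex.Gamma ((u:ℂ) + v) ≠ 0 := by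
    rw [← Complex.ofReal_add, Complex.Gamma_ofReal]
    exact_mod_cast huv
  calc Complex.betaIntegral u v
      = Complex.Gamma ((u:ℂ)+v) * Complex.betaIntegral u v / Complex.Gamma ((u:ℂ)+v) :=
        (mul_div_cancel_left₀ _ h3).symm
    _ = Complex.Gamma u * Complex.Gamma v / Complex.Gamma ((u:ℂ)+v) := by rw [← h2]
    _ = ((Real.Gamma u * Real.Gamma v / Real.Gamma (u+v) : ℝ) : ℂ) := by
        rw [Complex.ofReal_div, Complex.ofReal_mul, ← Complex.Gamma_ofReal,
          ← Complex.Gamma_ofReal, ← Complex.Gamma_ofReal, Complex.ofReal_add]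

lemma scaled_intble {α t c : ℝ} (hα0 : 0 < α) (hα1 : α < 1) (ht : 0 < t) (hc : 0 < c) :
    IntegrableOn (fun s : ℝ => (t-s) ^ (-α) * s ^ (c-1)) (Ioc 0 t) volume := by
  have hg : IntervalIntegrable (fun x : ℝ => x ^ (c-1) * (1-x) ^ (-α)) volume 0 1 := by
    have := beta_intble (v := 1-α) hc (by linarith)
    simpa using this
  have hcomp := hg.comp_mul_left (c := t⁻¹)
  rw [show (0:ℝ)/t⁻¹ = 0 by simp, show (1:ℝ)/t⁻¹ = t by field_simp] at hcomp
  rw [intervalIntegrable_iff_integrableOn_Ioc_of_le ht.le] at hcomp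
  have h2 := hcomp.const_mul (t ^ (-α) * t ^ (c-1))
  apply h2.congr
  rw [Filter.EventuallyEq, ae_restrict_iff' measurableSet_Ioc]
  filter_upwards with s hs
  obtain ⟨hs0, hst⟩ := hs
  have h3 : t⁻¹ * s = s / t := by ring
  have h4 : 1 - s / t = (t - s) / t := by field_simp
  rw [h3, h4, Real.div_rpow hs0.le ht.le, Real.div_rpow (by linarith) ht.le]
  rw [Real.rpow_neg ht.le α]
  have h5 : t ^ (c-1) ≠ 0 := (Real.rpow_pos_of_pos ht _).ne'
  have h6 : t ^ α ≠ 0 := (Real.rpow_pos_of_pos ht _).ne'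
  field_simp

lemma scaled_val {α t c : ℝ} (hα0 : 0 < α) (hα1 : α < 1) (ht : 0 < t) (hc : 0 < c) :
    ∫ s in (0:ℝ)..t, (t-s) ^ (-α) * s ^ (c-1)
      = t ^ (c-α) * (Real.Gamma c * Real.Gamma (1-α) / Real.Gamma (c + (1-α))) := by
  have key := intervalIntegral.smul_integral_comp_mul_left
    (f := fun s : ℝ => (t-s) ^ (-α) * s ^ (c-1)) (a := 0) (b := 1) t
  rw [mul_zero, mul_one] at key
  rw [← key]
  have h1 : (∫ x in (0:ℝ)..1, (t - t * x) ^ (-α) * (t * x) ^ (c-1))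
      = ∫ x in (0:ℝ)..1, (t ^ (-α) * t ^ (c-1)) * (x ^ (c-1) * (1-x) ^ (-α)) := by
    apply intervalIntegral.integral_congr
    intro x hx
    rw [Set.uIcc_of_le zero_le_one] at hx
    obtain ⟨h0, hx1⟩ := hx
    show (t - t * x) ^ (-α) * (t * x) ^ (c - 1) = _
    have : t - t * x = t * (1 - x) := by ring
    rw [this, Real.mul_rpow ht.le (by linarith), Real.mul_rpow ht.le h0]
    ring
  rw [h1, intervalIntegral.integral_const_mul]
  have h2 : (∫ x in (0:ℝ)..1, x ^ (c-1) * (1-x) ^ (-α))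
      = Real.Gamma c * Real.Gamma (1-α) / Real.Gamma (c + (1-α)) := by
    have := beta_val (v := 1-α) hc (by linarith)
    simpa using this
  rw [h2, smul_eq_mul]
  have h3 : t * (t ^ (-α) * t ^ (c-1)) = t ^ (c-α) := by
    nth_rewrite 1 [← Real.rpow_one t]
    rw [← Real.rpow_add ht, ← Real.rpow_add ht]
    ring_nf
  rw [← mul_assoc, h3]

lemma term_hasDerivAt {α lam : ℝ} (hα0 : 0 < α) (k : ℕ) {s : ℝ} (hs : 0 < s) :
    HasDerivAt (fun r : ℝ => (-lam * r ^ α) ^ k / Real.Gamma (k * α + 1))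
      ((-lam) ^ k * s ^ ((k:ℝ) * α - 1) / Real.Gamma ((k:ℝ) * α)) s := by
  rcases Nat.eq_zero_or_pos k with rfl | hk
  · simp only [Nat.cast_zero, pow_zero, zero_mul, Real.Gamma_zero, div_zero]
    exact hasDerivAt_const s _
  · have hk0 : (0:ℝ) < (k:ℝ) := by exact_mod_cast hk
    have hkα : 0 < (k:ℝ) * α := by positivity
    have hG1 : Real.Gamma ((k:ℝ) * α + 1) = (k:ℝ) * α * Real.Gamma ((k:ℝ) * α) :=
      Real.Gamma_add_one hkα.ne'
    have hGpos : 0 < Real.Gamma ((k:ℝ) * α) := Real.Gamma_pos_of_pos hkα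
    have h1 : HasDerivAt (fun r : ℝ => r ^ ((k:ℝ) * α))
        ((k:ℝ) * α * s ^ ((k:ℝ) * α - 1)) s :=
      Real.hasDerivAt_rpow_const (Or.inl hs.ne')
    have h2 := h1.const_mul ((-lam) ^ k / Real.Gamma ((k:ℝ) * α + 1))
    have heq : (fun r : ℝ => (-lam * r ^ α) ^ k / Real.Gamma (k * α + 1))
        =ᶠ[nhds s] fun r : ℝ =>
          (-lam) ^ k / Real.Gamma ((k:ℝ) * α + 1) * r ^ ((k:ℝ) * α) := by
      filter_upwards [Ioi_mem_nhds hs] with r hr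
      have hr0 : (0:ℝ) ≤ r := le_of_lt hr
      rw [mul_pow, ← Real.rpow_natCast (r ^ α) k, ← Real.rpow_mul hr0,
        mul_comm α (k:ℝ)]
      ring
    have h3 : HasDerivAt (fun r : ℝ => (-lam * r ^ α) ^ k / Real.Gamma (k * α + 1))
        ((-lam) ^ k / Real.Gamma ((k:ℝ) * α + 1) * ((k:ℝ) * α * s ^ ((k:ℝ) * α - 1))) s :=
      h2.congr_of_eventuallyEq heq
    convert h3 using 1
    rw [hG1]
    field_simp

lemma ml_hasDerivAt {α lam : ℝ} (hα0 : 0 < α) (hlam : 0 < lam) {y : ℝ} (hy : 0 < y) :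
    HasDerivAt (fun r : ℝ => mittagLeffler α 1 (-lam * r ^ α))
      (∑' k : ℕ, (-lam) ^ k * y ^ ((k:ℝ) * α - 1) / Real.Gamma ((k:ℝ) * α)) y := by
  simp only [mittagLeffler]
  set u : ℕ → ℝ := fun k => (2/y) * (lam * (y+1) ^ α) ^ k / Real.Gamma ((k:ℝ) * α) with hu
  have hTα : (0:ℝ) < (y+1) ^ α := Real.rpow_pos_of_pos (by linarith) _
  have husum : Summable u := by
    have := (summable_ml (b := 0) hα0
      (x := lam * (y+1) ^ α) (by positivity)).mul_left (2/y)
    simp only [add_zero] at this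
    apply this.congr
    intro k; rw [hu]; ring
  refine hasDerivAt_tsum_of_isPreconnected husum (t := Ioo (y/2) (y+1)) (y₀ := y)
    isOpen_Ioo isPreconnected_Ioo
    (fun k r hr => term_hasDerivAt hα0 k (lt_trans (half_pos hy) hr.1)) ?_
    ⟨by linarith, by linarith⟩ ?_ ⟨by linarith, by linarith⟩
  · -- bound
    intro k r hr
    obtain ⟨hr1, hr2⟩ := hr
    have hr0 : 0 < r := lt_trans (half_pos hy) hr1
    rcases Nat.eq_zero_or_pos k with rfl | hk
    · simp [hu, Real.Gamma_zero]
    · have hk0 : (0:ℝ) < (k:ℝ) := by exact_mod_cast hk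
      have hkα : 0 < (k:ℝ) * α := by positivity
      have hGpos : 0 < Real.Gamma ((k:ℝ) * α) := Real.Gamma_pos_of_pos hkα
      have h1 : r ^ ((k:ℝ) * α - 1) = r ^ ((k:ℝ) * α) / r := by
        rw [Real.rpow_sub hr0, Real.rpow_one]
      have h2 : r ^ ((k:ℝ) * α) ≤ (y+1) ^ ((k:ℝ) * α) :=
        Real.rpow_le_rpow hr0.le (by linarith) hkα.le
      have h3 : (y+1) ^ ((k:ℝ) * α) = ((y+1) ^ α) ^ k := by
        rw [mul_comm, Real.rpow_mul (by linarith), Real.rpow_natCast]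
      have h4 : r ^ ((k:ℝ) * α) / r ≤ ((y+1) ^ α) ^ k * (2/y) := by
        rw [div_le_iff₀ hr0]
        calc r ^ ((k:ℝ) * α) ≤ ((y+1) ^ α) ^ k := h3 ▸ h2
          _ = ((y+1)^α)^k * (2/y) * (y/2) := by field_simp
          _ ≤ ((y+1)^α)^k * (2/y) * r := by
              apply mul_le_mul_of_nonneg_left hr1.le (by positivity)
      rw [Real.norm_eq_abs, abs_div, abs_mul, abs_pow, abs_neg,
        abs_of_pos hlam, abs_of_pos hGpos,
        abs_of_pos (Real.rpow_pos_of_pos hr0 _)]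
      rw [hu, div_le_div_iff_of_pos_right hGpos]
      calc lam ^ k * r ^ ((k:ℝ)*α-1) = lam ^ k * (r ^ ((k:ℝ)*α) / r) := by rw [h1]
        _ ≤ lam ^ k * (((y+1)^α)^k * (2/y)) :=
            mul_le_mul_of_nonneg_left h4 (by positivity)
        _ = 2/y * (lam * (y+1)^α)^k := by rw [mul_pow]; ring
  · -- summable at y
    apply Summable.of_norm_bounded (summable_ml (b := 1) hα0
      (x := lam * y ^ α) (by positivity))
    intro k
    have hG : 0 < Real.Gamma ((k:ℝ) * α + 1) := Real.Gamma_pos_of_pos (by positivity)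
    rw [Real.norm_eq_abs, abs_div, abs_of_pos hG, abs_pow, abs_mul, abs_neg,
      abs_of_pos hlam, abs_of_pos (Real.rpow_pos_of_pos hy _)]

/-- $y(t)=E_{α,1}(-λ t^α)$ solves the Caputo fractional ODE $∂_t^α y = -λ y$:
for every $t>0$,
$(1/Γ(1-α))∫_0^t (t-s)^{-α} y'(s)\,ds = -λ E_{α,1}(-λ t^α)$. -/
theorem caputo_mittagLeffler (α lam : ℝ) (hα0 : 0 < α) (hα1 : α < 1) (hlam : 0 < lam) :
    ∀ t > (0:ℝ),
      (1 / Real.Gamma (1 - α)) *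
        ∫ s in (0:ℝ)..t,
          (t - s) ^ (-α) * deriv (fun r : ℝ => mittagLeffler α 1 (-lam * r ^ α)) s
      = -lam * mittagLeffler α 1 (-lam * t ^ α) := by
  intro t ht
  have hGα : 0 < Real.Gamma (1-α) := Real.Gamma_pos_of_pos (by linarith)
  have htα : (0:ℝ) < t ^ α := Real.rpow_pos_of_pos ht _
  set F : ℕ → ℝ → ℝ := fun k s =>
    (t-s) ^ (-α) * ((-lam) ^ k * s ^ ((k:ℝ) * α - 1) / Real.Gamma ((k:ℝ) * α)) with hF
  set W : ℕ → ℝ := fun k => if k = 0 then 0 else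
    (-lam) ^ k * t ^ ((k:ℝ)*α-α) * Real.Gamma (1-α) / Real.Gamma ((k:ℝ)*α-α+1) with hW
  set N : ℕ → ℝ := fun k => if k = 0 then 0 else
    lam ^ k * t ^ ((k:ℝ)*α-α) * Real.Gamma (1-α) / Real.Gamma ((k:ℝ)*α-α+1) with hN
  have hF0 : F 0 = fun _ => 0 := by
    funext s; simp [hF, Real.Gamma_zero]
  -- step A
  have hA : (∫ s in (0:ℝ)..t,
        (t-s) ^ (-α) * deriv (fun r : ℝ => mittagLeffler α 1 (-lam * r ^ α)) s)
      = ∫ s in Ioo (0:ℝ) t, ∑' k, F k s := by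
    rw [intervalIntegral.integral_of_le ht.le, MeasureTheory.integral_Ioc_eq_integral_Ioo]
    refine MeasureTheory.setIntegral_congr_fun measurableSet_Ioo (fun s hs => ?_)
    show (t-s) ^ (-α) * deriv (fun r : ℝ => mittagLeffler α 1 (-lam * r ^ α)) s
      = ∑' k, F k s
    rw [(ml_hasDerivAt hα0 hlam hs.1).deriv]
    exact (tsum_mul_left).symm
  -- integrability of each F k
  have hIk : ∀ k, Integrable (F k) (volume.restrict (Ioo (0:ℝ) t)) := by
    intro k
    rcases Nat.eq_zero_or_pos k with rfl | hk
    · rw [hF0]; exact integrable_zero _ _ _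
    · have hk0 : (0:ℝ) < (k:ℝ) := by exact_mod_cast hk
      have hc : 0 < (k:ℝ) * α := by positivity
      have h1 : IntegrableOn (fun s : ℝ => (t-s) ^ (-α) * s ^ ((k:ℝ)*α-1)) (Ioo 0 t) volume :=
        (scaled_intble hα0 hα1 ht hc).mono_set Ioo_subset_Ioc_self
      apply (h1.const_mul ((-lam) ^ k / Real.Gamma ((k:ℝ)*α))).congr
      filter_upwards with s
      show _ = F k s
      rw [hF]; ring
  -- value of each integral
  have hVal : ∀ k, ∫ s in Ioo (0:ℝ) t, F k s = W k := by
    intro k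
    rcases Nat.eq_zero_or_pos k with rfl | hk
    · rw [hF0]; simp [hW]
    · have hk1 : (1:ℝ) ≤ (k:ℝ) := by exact_mod_cast hk
      have hc : 0 < (k:ℝ) * α := by positivity
      have hGc : 0 < Real.Gamma ((k:ℝ)*α) := Real.Gamma_pos_of_pos hc
      have hGd : 0 < Real.Gamma ((k:ℝ)*α - α + 1) :=
        Real.Gamma_pos_of_pos (by nlinarith)
      have h1 : ∫ s in Ioo (0:ℝ) t, F k s
          = ((-lam) ^ k / Real.Gamma ((k:ℝ)*α)) *
            ∫ s in Ioo (0:ℝ) t, (t-s) ^ (-α) * s ^ ((k:ℝ)*α-1) := by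
        rw [← MeasureTheory.integral_const_mul]
        refine MeasureTheory.setIntegral_congr_fun measurableSet_Ioo (fun s _ => ?_)
        show F k s = _
        rw [hF]; ring
      rw [h1, ← MeasureTheory.integral_Ioc_eq_integral_Ioo,
        ← intervalIntegral.integral_of_le ht.le, scaled_val hα0 hα1 ht hc]
      simp only [hW]
      rw [if_neg (Nat.pos_iff_ne_zero.mp hk)]
      have e1 : (k:ℝ)*α + (1-α) = (k:ℝ)*α - α + 1 := by ring
      rw [e1]
      field_simp
  -- norm integrals
  have hNval : ∀ k, ∫ s in Ioo (0:ℝ) t, ‖F k s‖ = N k := by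
    intro k
    rcases Nat.eq_zero_or_pos k with rfl | hk
    · rw [hF0]; simp [hN]
    · have hk1 : (1:ℝ) ≤ (k:ℝ) := by exact_mod_cast hk
      have hc : 0 < (k:ℝ) * α := by positivity
      have hGc : 0 < Real.Gamma ((k:ℝ)*α) := Real.Gamma_pos_of_pos hc
      have hGd : 0 < Real.Gamma ((k:ℝ)*α - α + 1) :=
        Real.Gamma_pos_of_pos (by nlinarith)
      have h1 : ∫ s in Ioo (0:ℝ) t, ‖F k s‖
          = (lam ^ k / Real.Gamma ((k:ℝ)*α)) *
            ∫ s in Ioo (0:ℝ) t, (t-s) ^ (-α) * s ^ ((k:ℝ)*α-1) := by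
        rw [← MeasureTheory.integral_const_mul]
        refine MeasureTheory.setIntegral_congr_fun measurableSet_Ioo (fun s hs => ?_)
        show ‖F k s‖ = _
        have hp1 : (0:ℝ) ≤ (t-s) ^ (-α) := Real.rpow_nonneg (by linarith [hs.2]) _
        have hp2 : (0:ℝ) ≤ s ^ ((k:ℝ)*α-1) := Real.rpow_nonneg hs.1.le _
        rw [hF, Real.norm_eq_abs]
        show |(t-s) ^ (-α) * ((-lam) ^ k * s ^ ((k:ℝ) * α - 1) / Real.Gamma ((k:ℝ) * α))| = _
        rw [abs_mul, abs_div, abs_mul, abs_pow, abs_neg,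
          abs_of_pos hlam, abs_of_pos hGc, abs_of_nonneg hp1, abs_of_nonneg hp2]
        ring
      rw [h1, ← MeasureTheory.integral_Ioc_eq_integral_Ioo,
        ← intervalIntegral.integral_of_le ht.le, scaled_val hα0 hα1 ht hc]
      simp only [hN]
      rw [if_neg (Nat.pos_iff_ne_zero.mp hk)]
      have e1 : (k:ℝ)*α + (1-α) = (k:ℝ)*α - α + 1 := by ring
      rw [e1]
      field_simp
  -- summability of N
  have hpow : ∀ j : ℕ, (t ^ α) ^ j = t ^ ((j:ℝ)*α) := by
    intro j
    rw [← Real.rpow_natCast (t ^ α) j, ← Real.rpow_mul ht.le, mul_comm α (j:ℝ)]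
  have hNsum : Summable N := by
    apply Summable.of_nonneg_of_le
      (f := fun k : ℕ => (Real.Gamma (1-α) * t ^ (-α)) *
        ((lam * t ^ α) ^ k / Real.Gamma ((k:ℝ) * α + (1-α))))
    · intro k
      rcases Nat.eq_zero_or_pos k with rfl | hk
      · simp [hN]
      · have hk1 : (1:ℝ) ≤ (k:ℝ) := by exact_mod_cast hk
        have hGd : 0 < Real.Gamma ((k:ℝ)*α - α + 1) :=
          Real.Gamma_pos_of_pos (by nlinarith)
        simp only [hN]
        rw [if_neg (Nat.pos_iff_ne_zero.mp hk)]
        apply le_of_lt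
        apply div_pos _ hGd
        exact mul_pos (mul_pos (pow_pos hlam k) (Real.rpow_pos_of_pos ht _)) hGα
    · intro k
      rcases Nat.eq_zero_or_pos k with rfl | hk
      · simp only [hN, if_pos rfl, Nat.cast_zero, zero_mul, zero_add, pow_zero]
        apply le_of_lt
        exact mul_pos (mul_pos hGα (Real.rpow_pos_of_pos ht _))
          (div_pos one_pos (Real.Gamma_pos_of_pos (by linarith)))
      · have hk1 : (1:ℝ) ≤ (k:ℝ) := by exact_mod_cast hk
        simp only [hN]
        rw [if_neg (Nat.pos_iff_ne_zero.mp hk)]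
        apply le_of_eq
        have e1 : (k:ℝ)*α + (1-α) = (k:ℝ)*α - α + 1 := by ring
        rw [e1, mul_pow, hpow k]
        have e2 : t ^ ((k:ℝ)*α - α) = t ^ ((k:ℝ)*α) * t ^ (-α) := by
          rw [← Real.rpow_add ht]; ring_nf
        rw [e2]
        ring
    · exact (summable_ml (b := 1-α) hα0 (by positivity)).mul_left _
  -- summability of W
  have hWsum : Summable W := by
    apply Summable.of_norm_bounded hNsum
    intro k
    rcases Nat.eq_zero_or_pos k with rfl | hk
    · simp [hW, hN]
    · have hk1 : (1:ℝ) ≤ (k:ℝ) := by exact_mod_cast hk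
      have hc : 0 < (k:ℝ) * α := by positivity
      have hGd : 0 < Real.Gamma ((k:ℝ)*α - α + 1) :=
        Real.Gamma_pos_of_pos (by nlinarith)
      simp only [hW, hN]
      rw [if_neg (Nat.pos_iff_ne_zero.mp hk), if_neg (Nat.pos_iff_ne_zero.mp hk),
        Real.norm_eq_abs, abs_div, abs_mul, abs_mul, abs_pow, abs_neg,
        abs_of_pos hlam, abs_of_pos hGd, abs_of_pos hGα,
        abs_of_pos (Real.rpow_pos_of_pos ht _)]
  -- interchange
  have key := MeasureTheory.integral_tsum_of_summable_integral_norm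
    (μ := volume.restrict (Ioo (0:ℝ) t)) hIk
    (by rw [funext hNval]; exact hNsum)
  rw [hA, ← key]
  -- final computation
  have hterm : ∀ j : ℕ, (1 / Real.Gamma (1-α)) * W (j+1)
      = -lam * ((-lam * t ^ α) ^ j / Real.Gamma ((j:ℕ) * α + 1)) := by
    intro j
    simp only [hW]
    rw [if_neg (Nat.succ_ne_zero j)]
    have e1 : ((j+1:ℕ):ℝ)*α - α = (j:ℝ)*α := by push_cast; ring
    rw [e1]
    have hGd : Real.Gamma ((j:ℝ)*α + 1) ≠ 0 :=
      (Real.Gamma_pos_of_pos (by positivity)).ne'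
    rw [mul_pow, hpow j, pow_succ]
    field_simp
  have hsum2 : ∑' k, ∫ s in Ioo (0:ℝ) t, F k s = ∑' k, W k := tsum_congr hVal
  have hW0 : W 0 = 0 := by simp [hW]
  rw [hsum2, Summable.tsum_eq_zero_add hWsum, hW0, zero_add, ← tsum_mul_left]
  calc ∑' j : ℕ, (1 / Real.Gamma (1-α)) * W (j+1)
      = ∑' j : ℕ, -lam * ((-lam * t ^ α) ^ j / Real.Gamma ((j:ℕ) * α + 1)) :=
        tsum_congr hterm
    _ = -lam * ∑' j : ℕ, (-lam * t ^ α) ^ j / Real.Gamma ((j:ℕ) * α + 1) := tsum_mul_left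
    _ = -lam * mittagLeffler α 1 (-lam * t ^ α) := rfl
end

section
/- Let (λ_k)_{k≥1} be a strictly increasing sequence of positive real numbers and let (c_k)_{k≥1} be real numbers with ∑_{k=1}^∞ |c_k| < ∞. If for every η > 0 we have ∑_{k=1}^∞ c_k λ_k / (η + λ_k) = 0, then c_k = 0 for every k. -/
open Real Filter Set Topology

noncomputable def qq : ℕ → ℝ := fun j => 1 / ((j : ℝ) + 3)

lemma qq_pos (j : ℕ) : 0 < qq j := by
  unfold qq; positivity

lemma qq_le (j : ℕ) : qq j ≤ 1 / 3 := by
  unfold qq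
  rw [div_le_div_iff₀ (by positivity) (by norm_num)]
  have : (0:ℝ) ≤ (j:ℝ) := Nat.cast_nonneg j
  linarith

lemma qq_anti : StrictAnti qq := by
  intro a b hab
  unfold qq
  apply div_lt_div_of_pos_left one_pos (by positivity)
  have : (a:ℝ) < b := by exact_mod_cast hab
  linarith

lemma key (lam c : ℕ → ℝ) (hmono : StrictMono lam)
    (hpos : ∀ k, 0 < lam k) (hsum : Summable fun k => |c k|)
    (h : ∀ η > (0:ℝ), ∑' k, c k * lam k / (η + lam k) = 0) :
    c 0 = 0 := by
  have hlam0 : 0 < lam 0 := hpos 0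
  have hle : ∀ k, lam 0 ≤ lam k := fun k => hmono.monotone (Nat.zero_le k)
  have hQpos : ∀ (n k : ℕ), 0 < ∏ j ∈ Finset.range n, (qq j + lam k) := by
    intro n k
    exact Finset.prod_pos fun j _ => add_pos (qq_pos j) (hpos k)
  -- summability of all the modified series
  have hsumm : ∀ (n : ℕ) (η : ℝ), 0 < η →
      Summable (fun k => c k * lam k / ((η + lam k) * ∏ j ∈ Finset.range n, (qq j + lam k))) := by
    intro n η hη
    apply Summable.of_norm_bounded (g := fun k => |c k| * (1 / lam 0 ^ n)) (hsum.mul_right _)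
    intro k
    have h1 : 0 < η + lam k := add_pos hη (hpos k)
    have h2 : lam 0 ^ n ≤ ∏ j ∈ Finset.range n, (qq j + lam k) := by
      calc lam 0 ^ n = ∏ j ∈ Finset.range n, lam 0 := by
            rw [Finset.prod_const, Finset.card_range]
        _ ≤ _ := Finset.prod_le_prod (fun j _ => hlam0.le)
            (fun j _ => le_add_of_nonneg_left (qq_pos j).le |>.trans
              (add_le_add (le_refl _) (hle k)) |>.trans_eq rfl)
    have hQ := hQpos n k
    have hL : (0:ℝ) < lam 0 ^ n := pow_pos hlam0 n
    rw [Real.norm_eq_abs, abs_div, abs_mul, abs_of_pos (hpos k),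
      abs_of_pos (mul_pos h1 hQ), mul_one_div, mul_div_assoc]
    apply mul_le_mul_of_nonneg_left _ (abs_nonneg (c k))
    rw [div_le_iff₀ (mul_pos h1 hQ), inv_mul_eq_div, le_div_iff₀ hL]
    apply mul_le_mul (by linarith) h2 hL.le h1.le
  -- main induction: divided differences
  have P : ∀ n : ℕ, ∀ η : ℝ, 0 < η → (∀ j < n, η ≠ qq j) →
      (∑' k, c k * lam k / ((η + lam k) * ∏ j ∈ Finset.range n, (qq j + lam k))) = 0 := by
    intro n
    induction n with
    | zero =>
      intro η hη _
      simpa using h η hη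
    | succ n ih =>
      intro η hη hne
      have hημ : η ≠ qq n := hne n (Nat.lt_succ_self n)
      have A := ih η hη (fun j hj => hne j (hj.trans (Nat.lt_succ_self n)))
      have B := ih (qq n) (qq_pos n) (fun j hj => (qq_anti hj).ne)
      have hid : ∀ k, c k * lam k / ((η + lam k) * ∏ j ∈ Finset.range (n+1), (qq j + lam k))
          = (1 / (qq n - η)) *
            (c k * lam k / ((η + lam k) * ∏ j ∈ Finset.range n, (qq j + lam k))
              - c k * lam k / ((qq n + lam k) * ∏ j ∈ Finset.range n, (qq j + lam k))) := by
        intro k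
        have h1 : 0 < η + lam k := add_pos hη (hpos k)
        have h2 : 0 < qq n + lam k := add_pos (qq_pos n) (hpos k)
        have h3 := hQpos n k
        have h4 : qq n - η ≠ 0 := sub_ne_zero.mpr (Ne.symm hημ)
        rw [Finset.prod_range_succ]
        field_simp
        ring
      calc (∑' k, c k * lam k / ((η + lam k) * ∏ j ∈ Finset.range (n+1), (qq j + lam k)))
          = ∑' k, (1 / (qq n - η)) *
            (c k * lam k / ((η + lam k) * ∏ j ∈ Finset.range n, (qq j + lam k))
              - c k * lam k / ((qq n + lam k) * ∏ j ∈ Finset.range n, (qq j + lam k))) :=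
            tsum_congr hid
        _ = (1 / (qq n - η)) *
            ∑' k, (c k * lam k / ((η + lam k) * ∏ j ∈ Finset.range n, (qq j + lam k))
              - c k * lam k / ((qq n + lam k) * ∏ j ∈ Finset.range n, (qq j + lam k))) :=
            tsum_mul_left
        _ = (1 / (qq n - η)) * ((∑' k, c k * lam k / ((η + lam k) * ∏ j ∈ Finset.range n, (qq j + lam k)))
              - ∑' k, c k * lam k / ((qq n + lam k) * ∏ j ∈ Finset.range n, (qq j + lam k))) := by
            rw [Summable.tsum_sub (hsumm n η hη) (hsumm n (qq n) (qq_pos n))]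
        _ = 0 := by rw [A, B]; ring
  -- Final limit argument with η = 2
  set t : ℕ → ℕ → ℝ := fun n k =>
    (c k * lam k / ((2 + lam k) * ∏ j ∈ Finset.range n, (qq j + lam k))) *
      ((2 + lam 0) * ∏ j ∈ Finset.range n, (qq j + lam 0)) with ht
  have htzero : ∀ n, (∑' k, t n k) = 0 := by
    intro n
    have h2q : ∀ j < n, (2:ℝ) ≠ qq j := by
      intro j _ hc
      have h3 := qq_le j
      rw [← hc] at h3; linarith
    rw [ht]
    simp only
    rw [tsum_mul_right, P n 2 (by norm_num) h2q, zero_mul]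
  -- pointwise limits
  have hQle : ∀ n k, (∏ j ∈ Finset.range n, (qq j + lam 0)) ≤ ∏ j ∈ Finset.range n, (qq j + lam k) := by
    intro n k
    exact Finset.prod_le_prod (fun j _ => (add_pos (qq_pos j) hlam0).le)
      (fun j _ => add_le_add (le_refl _) (hle k))
  have hbound : ∀ n k, ‖t n k‖ ≤ |c k| * (2 + lam 0) := by
    intro n k
    have h1 : 0 < 2 + lam k := by linarith [hpos k]
    have h2 : 0 < 2 + lam 0 := by linarith
    have hQk := hQpos n k
    have hQ0 := hQpos n 0
    rw [ht]
    simp only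
    rw [Real.norm_eq_abs, abs_mul, abs_div, abs_mul, abs_of_pos (hpos k),
      abs_of_pos (mul_pos h1 hQk), abs_of_pos (mul_pos h2 hQ0)]
    rw [div_mul_eq_mul_div, div_le_iff₀ (mul_pos h1 hQk)]
    calc |c k| * lam k * ((2 + lam 0) * ∏ j ∈ Finset.range n, (qq j + lam 0))
        ≤ |c k| * (2 + lam k) * ((2 + lam 0) * ∏ j ∈ Finset.range n, (qq j + lam k)) := by
          apply mul_le_mul
          · exact mul_le_mul_of_nonneg_left (by linarith) (abs_nonneg _)
          · exact mul_le_mul_of_nonneg_left (hQle n k) h2.le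
          · positivity
          · positivity
      _ = |c k| * (2 + lam 0) * ((2 + lam k) * ∏ j ∈ Finset.range n, (qq j + lam k)) := by ring
  have hlimpt : ∀ k, Tendsto (fun n => t n k) atTop
      (𝓝 (if k = 0 then c 0 * lam 0 else 0)) := by
    intro k
    rcases Nat.eq_zero_or_pos k with rfl | hk
    · simp only [if_pos rfl]
      have : ∀ n, t n 0 = c 0 * lam 0 := by
        intro n
        rw [ht]
        simp only
        rw [div_mul_cancel₀]
        exact (mul_pos (by linarith : (0:ℝ) < 2 + lam 0) (hQpos n 0)).ne'
      simp only [this]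
      exact tendsto_const_nhds
    · have hk0 : k ≠ 0 := hk.ne'
      simp only [if_neg hk0]
      have hlt : lam 0 < lam k := hmono hk
      set ρ : ℝ := (1/3 + lam 0) / (1/3 + lam k) with hρ
      have hρ0 : 0 ≤ ρ := by
        apply div_nonneg <;> [linarith; linarith]
      have hρ1 : ρ < 1 := by
        rw [hρ, div_lt_one (by linarith)]; linarith
      have h0 : Tendsto (fun n => (|c k| * (2 + lam 0)) * ρ ^ n) atTop (𝓝 0) := by
        simpa using (tendsto_pow_atTop_nhds_zero_of_lt_one hρ0 hρ1).const_mul (|c k| * (2 + lam 0))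
      apply squeeze_zero_norm _ h0
      intro n
      -- ‖t n k‖ ≤ (|c k| * (2 + lam 0)) * ρ ^ n
      have h1 : 0 < 2 + lam k := by linarith [hpos k]
      have h2 : 0 < 2 + lam 0 := by linarith
      have hQk := hQpos n k
      have hQ0 := hQpos n 0
      have hprod : (∏ j ∈ Finset.range n, (qq j + lam 0)) ≤ ρ ^ n * ∏ j ∈ Finset.range n, (qq j + lam k) := by
        have : ρ ^ n * ∏ j ∈ Finset.range n, (qq j + lam k)
            = ∏ j ∈ Finset.range n, (ρ * (qq j + lam k)) := by
          rw [Finset.prod_mul_distrib, Finset.prod_const, Finset.card_range]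
        rw [this]
        apply Finset.prod_le_prod (fun j _ => (add_pos (qq_pos j) hlam0).le)
        intro j _
        have hq := qq_pos j
        have hq3 := qq_le j
        rw [hρ, div_mul_eq_mul_div, le_div_iff₀ (by linarith)]
        nlinarith
      rw [ht]
      simp only
      rw [Real.norm_eq_abs, abs_mul, abs_div, abs_mul, abs_of_pos (hpos k),
        abs_of_pos (mul_pos h1 hQk), abs_of_pos (mul_pos h2 hQ0)]
      rw [div_mul_eq_mul_div, div_le_iff₀ (mul_pos h1 hQk)]
      calc |c k| * lam k * ((2 + lam 0) * ∏ j ∈ Finset.range n, (qq j + lam 0))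
          ≤ |c k| * (2 + lam k) * ((2 + lam 0) * (ρ ^ n * ∏ j ∈ Finset.range n, (qq j + lam k))) := by
            apply mul_le_mul
            · exact mul_le_mul_of_nonneg_left (by linarith) (abs_nonneg _)
            · exact mul_le_mul_of_nonneg_left hprod h2.le
            · positivity
            · positivity
        _ = |c k| * (2 + lam 0) * ρ ^ n * ((2 + lam k) * ∏ j ∈ Finset.range n, (qq j + lam k)) := by
            ring
  have hmain : Tendsto (fun n => ∑' k, t n k) atTop
      (𝓝 (∑' k, (if k = 0 then c 0 * lam 0 else 0))) :=
    tendsto_tsum_of_dominated_convergence (hsum.mul_right (2 + lam 0)) hlimpt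
      (Filter.Eventually.of_forall (fun n k => hbound n k))
  have h1 : (∑' k : ℕ, (if k = 0 then c 0 * lam 0 else 0)) = c 0 * lam 0 := tsum_ite_eq 0 _
  have h2 : Tendsto (fun n => ∑' k, t n k) atTop (𝓝 0) := by
    simp only [htzero]; exact tendsto_const_nhds
  have := tendsto_nhds_unique hmain h2
  rw [h1] at this
  have := mul_eq_zero.mp this
  rcases this with h | h
  · exact h
  · exact absurd h hlam0.ne'

/-- If `(λₖ)` is strictly increasing and positive, `∑|cₖ| < ∞`, and
`∑ₖ cₖ λₖ/(η+λₖ) = 0` for every `η > 0`, then every `cₖ = 0`. -/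
theorem vanishing_residues (lam c : ℕ → ℝ) (hmono : StrictMono lam)
    (hpos : ∀ k, 0 < lam k) (hsum : Summable fun k => |c k|)
    (h : ∀ η > (0:ℝ), ∑' k, c k * lam k / (η + lam k) = 0) :
    ∀ k, c k = 0 := by
  intro k
  induction k using Nat.strong_induction_on with
  | _ k ih =>
  have := key (fun i => lam (k + i)) (fun i => c (k + i))
    (fun a b hab => hmono (by omega))
    (fun i => hpos (k + i))
    ((summable_nat_add_iff k).mpr hsum |>.congr (fun i => by simp [Nat.add_comm]))
    ?_
  · simpa using this
  · intro η hη
    have hf : Summable (fun i => c i * lam i / (η + lam i)) := by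
      apply Summable.of_norm_bounded hsum
      intro i
      have h1 : 0 < η + lam i := add_pos hη (hpos i)
      rw [Real.norm_eq_abs, abs_div, abs_mul, abs_of_pos (hpos i), abs_of_pos h1]
      rw [div_le_iff₀ h1]
      nlinarith [abs_nonneg (c i), hpos i]
    have hsplit := hf.sum_add_tsum_nat_add k
    have hzero : (∑ i ∈ Finset.range k, c i * lam i / (η + lam i)) = 0 := by
      apply Finset.sum_eq_zero
      intro i hi
      rw [ih i (Finset.mem_range.mp hi)]
      ring
    have : (∑' i, c (i + k) * lam (i + k) / (η + lam (i + k))) = 0 := by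
      have := hf.sum_add_tsum_nat_add k
      rw [hzero, zero_add, h η hη] at this
      exact this
    calc (∑' i, c (k + i) * lam (k + i) / (η + lam (k + i)))
        = ∑' i, c (i + k) * lam (i + k) / (η + lam (i + k)) := by
          apply tsum_congr; intro i; rw [Nat.add_comm]
      _ = 0 := this
end
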